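/- Let q be an even power of an odd prime with √q ≡ 3 (mod 4), and let w ∈ F_q be a nonsquare. Then there do not exist a, b, c, d in the subfield F_{√q} of F_q with ad − bc ≠ 0 satisfying c²w² + (a² + d²)w + b² = 0. -/

import Mathlib

/-- Let `q = s²` be an even power of an odd prime with `s = √q ≡ 3 (mod 4)` and let
`w ∈ F_q` be a nonsquare. Then there are no `a, b, c, d` in the subfield `F_{√q}`
(characterized by `x^s = x`) with `ad - bc ≠ 0` and `c²w² + (a² + d²)w + b² = 0`. -/
theorem no_subfield_solution
    (p k s : ℕ) (hp : p.Prime) (hpodd : Odd p) (hk : 0 < k) (hs : s = p ^ k)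
    (hmod : s % 4 = 3)
    (F : Type) [Field F] [Fintype F] (hF : Fintype.card F = s ^ 2)
    (w : F) (hw : ¬ IsSquare w) :
    ¬ ∃ a b c d : F, a ^ s = a ∧ b ^ s = b ∧ c ^ s = c ∧ d ^ s = d ∧
      a * d - b * c ≠ 0 ∧ c ^ 2 * w ^ 2 + (a ^ 2 + d ^ 2) * w + b ^ 2 = 0 := by
  rintro ⟨a, b, c, d, ha, hb, hc, hd, hdet, heq⟩
  have hw0 : w ≠ 0 := fun h => hw (h ▸ (IsSquare.zero : IsSquare (0 : F)))
  -- characteristic is p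
  have hpne2 : p ≠ 2 := by rintro rfl; exact (by decide : ¬ Odd 2) hpodd
  haveI : Fact p.Prime := ⟨hp⟩
  have hcharP : CharP F p := by
    have hdvd : ringChar F ∣ s ^ 2 := by
      apply ringChar.dvd
      rw [← hF]; exact FiniteField.cast_card_eq_zero F
    rw [hs, ← pow_mul] at hdvd
    have hprime : (ringChar F).Prime := CharP.char_is_prime F (ringChar F)
    have : ringChar F = p :=
      ((Nat.prime_dvd_prime_iff_eq hprime hp).mp (hprime.dvd_of_dvd_pow hdvd))
    rw [← this]; exact ringChar.charP F
  haveI := hcharP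
  have h2ne : (2 : F) ≠ 0 := by
    have := (CharP.cast_eq_zero_iff F p 2)
    intro h
    have hpd : p ∣ 2 := this.mp (by exact_mod_cast h)
    exact hpne2 ((Nat.prime_dvd_prime_iff_eq hp Nat.prime_two).mp hpd)
  have hrc2 : ringChar F ≠ 2 := by
    rw [ringChar.eq F p]; exact hpne2
  have hsodd : s % 2 = 1 := by omega
  -- key lemma: if w^(s+1) is the square of a nonzero element of the subfield, w is a square
  have key : ∀ e : F, e ≠ 0 → e ^ s = e → w ^ (s + 1) = e ^ 2 → IsSquare w := by
    intro e he hes hws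
    rw [FiniteField.isSquare_iff hrc2 hw0]
    obtain ⟨m, hm⟩ : ∃ m, s = 2 * m + 1 := ⟨s / 2, by omega⟩
    have hcard2 : Fintype.card F / 2 = (s + 1) * m := by
      rw [hF, hm]
      have : (2 * m + 1) ^ 2 = 2 * ((2 * m + 1 + 1) * m) + 1 := by ring
      omega
    have he1 : e ^ (2 * m) = 1 := by
      have h1 : e ^ (2 * m) * e = 1 * e := by
        rw [one_mul, ← pow_succ, ← hm, hes]
      exact mul_right_cancel₀ he h1
    calc w ^ (Fintype.card F / 2) = (w ^ (s + 1)) ^ m := by rw [hcard2, pow_mul]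
      _ = (e ^ 2) ^ m := by rw [hws]
      _ = e ^ (2 * m) := by rw [← pow_mul]
      _ = 1 := he1
  -- conjugate equation via iterated Frobenius
  have heq2 : c ^ 2 * (w ^ s) ^ 2 + (a ^ 2 + d ^ 2) * (w ^ s) + b ^ 2 = 0 := by
    have h := congrArg (iterateFrobenius F p k) heq
    simp only [map_add, map_mul, map_pow, map_zero, iterateFrobenius_def, ← hs] at h
    rw [ha, hb, hc, hd] at h
    exact h
  by_cases hwf : w ^ s = w
  · exact hw (key w hw0 hwf (by rw [pow_succ, hwf]; ring))
  by_cases hc0 : c = 0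
  · -- degenerate case: linear equation
    have h1 : (a ^ 2 + d ^ 2) * w + b ^ 2 = 0 := by
      rw [hc0] at heq; linear_combination heq
    have h2 : (a ^ 2 + d ^ 2) * (w ^ s) + b ^ 2 = 0 := by
      rw [hc0] at heq2; linear_combination heq2
    have had : a ^ 2 + d ^ 2 = 0 := by
      by_contra h
      exact hwf (mul_left_cancel₀ h (by linear_combination h1 - h2)).symm
    have hb0 : b = 0 := by
      have : b ^ 2 = 0 := by linear_combination h1 - w * had
      exact pow_eq_zero_iff (by norm_num) |>.mp this
    have hd0 : d ≠ 0 := fun h => hdet (by rw [hb0, h]; ring)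
    have ha0 : a ≠ 0 := fun h => hdet (by rw [hb0, h]; ring)
    set x : F := a / d with hxdef
    have hx : x ^ 2 = -1 := by
      rw [hxdef, div_pow, div_eq_iff (pow_ne_zero 2 hd0)]
      linear_combination had
    have hxs : x ^ s = x := by rw [hxdef, div_pow, ha, hd]
    obtain ⟨m, hm⟩ : ∃ m, s = 4 * m + 3 := ⟨s / 4, by omega⟩
    have hneg : x ^ s = -x := by
      calc x ^ s = ((x ^ 2) ^ 2) ^ m * (x ^ 2 * x) := by rw [hm]; ring
        _ = (((-1 : F)) ^ 2) ^ m * ((-1) * x) := by rw [hx]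
        _ = -x := by ring
    have hx0 : x = 0 := by
      have h2x : 2 * x = 0 := by
        have := hxs.symm.trans hneg
        linear_combination this
      rcases mul_eq_zero.mp h2x with h | h
      · exact absurd h h2ne
      · exact h
    exact (div_ne_zero ha0 hd0) hx0
  · -- general case: c ≠ 0
    have hne : w - w ^ s ≠ 0 := sub_ne_zero.mpr (Ne.symm hwf)
    have hfac : (w - w ^ s) * (c ^ 2 * (w + w ^ s) + (a ^ 2 + d ^ 2)) = 0 := by
      linear_combination heq - heq2
    have hsum : a ^ 2 + d ^ 2 = -c ^ 2 * (w + w ^ s) := by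
      have := (mul_eq_zero.mp hfac).resolve_left hne
      linear_combination this
    have hprod' : c ^ 2 * (w ^ s * w) = b ^ 2 := by
      linear_combination w * hsum - heq
    have hprod : w ^ (s + 1) = (b / c) ^ 2 := by
      rw [pow_succ, div_pow]
      field_simp
      linear_combination hprod'
    have hbne : b ≠ 0 := by
      intro h
      rw [h] at hprod
      apply hw0
      have : w ^ (s + 1) = 0 := by rw [hprod]; simp
      exact pow_eq_zero_iff (by omega) |>.mp this
    exact hw (key (b / c) (div_ne_zero hbne hc0) (by rw [div_pow, hb, hc]) hprod)
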